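/- Let N ≥ 1 and let P be a symmetric block tri-diagonal real matrix with diagonal blocks 𝒫₁,…,𝒫_N (each 𝒫ᵢ symmetric of size nᵢ×nᵢ), super-diagonal blocks ℛ₂,…,ℛ_N (ℛᵢ of size n_{i-1}×nᵢ sitting in block position (i-1,i)), sub-diagonal blocks ℛᵢ' in positions (i,i-1), and all other blocks zero. Define the sequence of matrices M₁ = 𝒫₁ and Mᵢ = 𝒫ᵢ − ℛᵢ' M_{i-1}⁻¹ ℛᵢ for i = 2,…,N (each Mᵢ defined whenever M_{i-1} is invertible). Then P is positive definite if and only if Mᵢ is well-defined and positive definite for every i ∈ {1,…,N}. -/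

import Mathlib

open Matrix Finset

/-! ### Auxiliary lemmas -/

/-- For a symmetric invertible matrix, `(M⁻¹ b) ⬝ (M c) = b ⬝ c`. -/
lemma dot_inv_symm {m : ℕ} (M : Matrix (Fin m) (Fin m) ℝ) (hs : M.IsSymm)
    (hu : IsUnit M.det) (b c : Fin m → ℝ) :
    (M⁻¹ *ᵥ b) ⬝ᵥ M *ᵥ c = b ⬝ᵥ c := by
  rw [dotProduct_mulVec, ← mulVec_transpose, hs, mulVec_mulVec,
    Matrix.mul_nonsing_inv _ hu, one_mulVec]

/-- Completion of the square. -/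
lemma complete_sq {m : ℕ} (M : Matrix (Fin m) (Fin m) ℝ) (hs : M.IsSymm)
    (hu : IsUnit M.det) (a b : Fin m → ℝ) :
    (a + M⁻¹ *ᵥ b) ⬝ᵥ M *ᵥ (a + M⁻¹ *ᵥ b)
      = a ⬝ᵥ M *ᵥ a + 2 * (a ⬝ᵥ b) + b ⬝ᵥ M⁻¹ *ᵥ b := by
  have h1 : M *ᵥ (M⁻¹ *ᵥ b) = b := by
    rw [mulVec_mulVec, Matrix.mul_nonsing_inv _ hu, one_mulVec]
  rw [mulVec_add, h1, dotProduct_add, add_dotProduct, add_dotProduct,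
    dot_inv_symm M hs hu b a, dotProduct_comm (M⁻¹ *ᵥ b) b,
    dotProduct_comm b a]
  ring

/-- Dot product with a transposed matrix action. -/
lemma dot_transpose {a b : ℕ} (A : Matrix (Fin a) (Fin b) ℝ) (u : Fin b → ℝ) (y : Fin a → ℝ) :
    u ⬝ᵥ Aᵀ *ᵥ y = (A *ᵥ u) ⬝ᵥ y := by
  rw [dotProduct_mulVec, vecMul_transpose]

/-- Symmetry of the Schur recursion matrices. -/
lemma M_symm (n : ℕ → ℕ)
    (Pb : (i : ℕ) → Matrix (Fin (n i)) (Fin (n i)) ℝ)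
    (Rb : (i : ℕ) → Matrix (Fin (n i)) (Fin (n (i + 1))) ℝ)
    (hPb : ∀ i, (Pb i).IsSymm)
    (M : (i : ℕ) → Matrix (Fin (n i)) (Fin (n i)) ℝ)
    (hM0 : M 0 = Pb 0)
    (hMs : ∀ i : ℕ, M (i + 1) = Pb (i + 1) - (Rb i)ᵀ * (M i)⁻¹ * Rb i) :
    ∀ i, (M i).IsSymm := by
  intro i
  induction i with
  | zero => rw [hM0]; exact hPb 0
  | succ k ih =>
    have ih' : (M k)ᵀ = M k := ih
    have hPb' : (Pb (k+1))ᵀ = Pb (k+1) := hPb (k+1)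
    show (M (k+1))ᵀ = M (k+1)
    rw [hMs k, transpose_sub, hPb', transpose_mul, transpose_mul,
      transpose_transpose, transpose_nonsing_inv, ih', Matrix.mul_assoc]

/-- The completion-of-squares identity for the block tridiagonal quadratic form. -/
lemma sq_identity (n : ℕ → ℕ)
    (Pb : (i : ℕ) → Matrix (Fin (n i)) (Fin (n i)) ℝ)
    (Rb : (i : ℕ) → Matrix (Fin (n i)) (Fin (n (i + 1))) ℝ)
    (M : (i : ℕ) → Matrix (Fin (n i)) (Fin (n i)) ℝ)
    (hM0 : M 0 = Pb 0)
    (hMs : ∀ i : ℕ, M (i + 1) = Pb (i + 1) - (Rb i)ᵀ * (M i)⁻¹ * Rb i)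
    (hMsym : ∀ i, (M i).IsSymm) :
    ∀ (K : ℕ) (v : (i : ℕ) → Fin (n i) → ℝ), (∀ j, j ≤ K → IsUnit (M j).det) →
    ∑ i ∈ Finset.range (K+1),
        (v i ⬝ᵥ Pb i *ᵥ v i + 2 * (v i ⬝ᵥ Rb i *ᵥ v (i+1)))
      = ∑ i ∈ Finset.range (K+1),
          ((v i + (M i)⁻¹ *ᵥ Rb i *ᵥ v (i+1)) ⬝ᵥ M i *ᵥ (v i + (M i)⁻¹ *ᵥ Rb i *ᵥ v (i+1)))
        - (Rb K *ᵥ v (K+1)) ⬝ᵥ (M K)⁻¹ *ᵥ (Rb K *ᵥ v (K+1)) := by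
  intro K
  induction K with
  | zero =>
    intro v hinv
    have h := complete_sq (M 0) (hMsym 0) (hinv 0 le_rfl) (v 0) (Rb 0 *ᵥ v 1)
    simp only [zero_add, Finset.sum_range_one]
    rw [h, hM0]
    ring
  | succ K ih =>
    intro v hinv
    have hinv' : ∀ j, j ≤ K → IsUnit (M j).det := fun j hj => hinv j (le_trans hj (Nat.le_succ _))
    have hK := ih v hinv'
    have hcs := complete_sq (M (K+1)) (hMsym (K+1)) (hinv (K+1) le_rfl)
      (v (K+1)) (Rb (K+1) *ᵥ v (K+2))
    have hquad : v (K+1) ⬝ᵥ Pb (K+1) *ᵥ v (K+1)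
        = v (K+1) ⬝ᵥ M (K+1) *ᵥ v (K+1)
          + (Rb K *ᵥ v (K+1)) ⬝ᵥ (M K)⁻¹ *ᵥ (Rb K *ᵥ v (K+1)) := by
      rw [hMs K, sub_mulVec, dotProduct_sub]
      have : ((Rb K)ᵀ * (M K)⁻¹ * Rb K) *ᵥ v (K+1)
          = (Rb K)ᵀ *ᵥ ((M K)⁻¹ *ᵥ (Rb K *ᵥ v (K+1))) := by
        rw [mulVec_mulVec, mulVec_mulVec, Matrix.mul_assoc]
      rw [this, dot_transpose]
      ring
    rw [Finset.sum_range_succ, Finset.sum_range_succ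
      (f := fun i => ((v i + (M i)⁻¹ *ᵥ Rb i *ᵥ v (i+1)) ⬝ᵥ M i *ᵥ (v i + (M i)⁻¹ *ᵥ Rb i *ᵥ v (i+1)))),
      hK, hcs, hquad]
    ring

/-- Backward substitution vector family, used for testing positivity of Schur complements. -/
noncomputable def bsub (n : ℕ → ℕ)
    (M : (i : ℕ) → Matrix (Fin (n i)) (Fin (n i)) ℝ)
    (Rb : (i : ℕ) → Matrix (Fin (n i)) (Fin (n (i + 1))) ℝ)
    (k : ℕ) (w : Fin (n (k+1)) → ℝ) : (j : ℕ) → Fin (n j) → ℝ := fun j =>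
  if h : j < k + 1 then
    fun a => -(((M j)⁻¹ *ᵥ (Rb j *ᵥ bsub n M Rb k w (j+1))) a)
  else if h2 : j = k + 1 then fun a => w (Fin.cast (by rw [h2]) a)
  else 0
termination_by j => k + 2 - j
decreasing_by omega

lemma bsub_lt (n : ℕ → ℕ) (M) (Rb) (k : ℕ) (w : Fin (n (k+1)) → ℝ) (j : ℕ) (h : j < k + 1) :
    bsub n M Rb k w j = -((M j)⁻¹ *ᵥ (Rb j *ᵥ bsub n M Rb k w (j+1))) := by
  rw [bsub]
  simp [h]
  rfl

lemma bsub_eq (n : ℕ → ℕ) (M) (Rb) (k : ℕ) (w : Fin (n (k+1)) → ℝ) :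
    bsub n M Rb k w (k+1) = w := by
  rw [bsub]
  simp only [lt_irrefl, dif_neg (lt_irrefl (k+1)), dif_pos rfl]
  funext a
  exact congrArg w (Fin.ext rfl)

lemma bsub_gt (n : ℕ → ℕ) (M) (Rb) (k : ℕ) (w : Fin (n (k+1)) → ℝ) (j : ℕ) (h : k + 1 < j) :
    bsub n M Rb k w j = 0 := by
  rw [bsub]
  rw [dif_neg (by omega), dif_neg (by omega)]

/-- The matrix `T` of block-pair contributions to the quadratic form. -/
noncomputable def Tm (N : ℕ) (n : ℕ → ℕ)
    (P : Matrix ((i : Fin (N + 1)) × Fin (n i)) ((i : Fin (N + 1)) × Fin (n i)) ℝ)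
    (x : ((i : Fin (N + 1)) × Fin (n i)) → ℝ) : ℕ → ℕ → ℝ := fun i j =>
  if hi : i < N + 1 then
    if hj : j < N + 1 then
      ∑ a : Fin (n i), ∑ b : Fin (n j),
        x ⟨⟨i, hi⟩, a⟩ * (P ⟨⟨i, hi⟩, a⟩ ⟨⟨j, hj⟩, b⟩ * x ⟨⟨j, hj⟩, b⟩)
    else 0
  else 0

/-- Bridge: the quadratic form of `P` in terms of the block data. -/
lemma bridge (N : ℕ) (n : ℕ → ℕ)
    (Pb : (i : ℕ) → Matrix (Fin (n i)) (Fin (n i)) ℝ)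
    (Rb : (i : ℕ) → Matrix (Fin (n i)) (Fin (n (i + 1))) ℝ)
    (P : Matrix ((i : Fin (N + 1)) × Fin (n i)) ((i : Fin (N + 1)) × Fin (n i)) ℝ)
    (hPsymm : P.IsSymm)
    (hdiag : ∀ (i : Fin (N + 1)) (a b : Fin (n i)), P ⟨i, a⟩ ⟨i, b⟩ = Pb i a b)
    (hsuper : ∀ (i j : Fin (N + 1)) (hij : (j : ℕ) = (i : ℕ) + 1)
      (a : Fin (n i)) (b : Fin (n j)),
      P ⟨i, a⟩ ⟨j, b⟩ = Rb i a (Fin.cast (congrArg n hij) b))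
    (hzero : ∀ (i j : Fin (N + 1)), (i : ℕ) + 1 < (j : ℕ) →
      ∀ (a : Fin (n i)) (b : Fin (n j)), P ⟨i, a⟩ ⟨j, b⟩ = 0)
    (x : ((i : Fin (N + 1)) × Fin (n i)) → ℝ)
    (v : (i : ℕ) → Fin (n i) → ℝ)
    (hv : ∀ (i : Fin (N + 1)) (a : Fin (n i)), v i a = x ⟨i, a⟩)
    (hv0 : v (N + 1) = 0) :
    x ⬝ᵥ P *ᵥ x
      = ∑ i ∈ Finset.range (N+1),
          (v i ⬝ᵥ Pb i *ᵥ v i + 2 * (v i ⬝ᵥ Rb i *ᵥ v (i+1))) := by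
  classical
  set T := Tm N n P x with hT
  -- Step A : quadratic form as a double sum of T
  have hQ : x ⬝ᵥ P *ᵥ x = ∑ i ∈ Finset.range (N+1), ∑ j ∈ Finset.range (N+1), T i j := by
    have e1 : x ⬝ᵥ P *ᵥ x
        = ∑ p : ((i : Fin (N + 1)) × Fin (n i)), ∑ q : ((i : Fin (N + 1)) × Fin (n i)),
            x p * (P p q * x q) := by
      simp [dotProduct, mulVec, Finset.mul_sum]
    have e2 : ∀ p : ((i : Fin (N + 1)) × Fin (n i)),
        ∑ q : ((i : Fin (N + 1)) × Fin (n i)), x p * (P p q * x q)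
          = ∑ j : Fin (N+1), ∑ b : Fin (n j), x p * (P p ⟨j, b⟩ * x ⟨j, b⟩) := by
      intro p
      rw [← Finset.univ_sigma_univ, Finset.sum_sigma]
    have e3 : x ⬝ᵥ P *ᵥ x
        = ∑ i : Fin (N+1), ∑ j : Fin (N+1), ∑ a : Fin (n i), ∑ b : Fin (n j),
            x ⟨i, a⟩ * (P ⟨i, a⟩ ⟨j, b⟩ * x ⟨j, b⟩) := by
      rw [e1]
      rw [← Finset.univ_sigma_univ, Finset.sum_sigma]
      refine Finset.sum_congr rfl fun i _ => ?_
      calc ∑ a : Fin (n i), ∑ q : ((i : Fin (N + 1)) × Fin (n i)), x ⟨i, a⟩ * (P ⟨i, a⟩ q * x q)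
          = ∑ a : Fin (n i), ∑ j : Fin (N+1), ∑ b : Fin (n j),
              x ⟨i, a⟩ * (P ⟨i, a⟩ ⟨j, b⟩ * x ⟨j, b⟩) := by
            exact Finset.sum_congr rfl fun a _ => e2 ⟨i, a⟩
        _ = _ := Finset.sum_comm
    have e4 : ∀ (i j : Fin (N+1)),
        (∑ a : Fin (n i), ∑ b : Fin (n j), x ⟨i, a⟩ * (P ⟨i, a⟩ ⟨j, b⟩ * x ⟨j, b⟩))
          = T (i : ℕ) (j : ℕ) := by
      intro i j
      rw [hT]
      simp only [Tm, dif_pos i.isLt, dif_pos j.isLt, Fin.eta]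
    rw [e3]
    calc ∑ i : Fin (N+1), ∑ j : Fin (N+1), ∑ a : Fin (n i), ∑ b : Fin (n j),
            x ⟨i, a⟩ * (P ⟨i, a⟩ ⟨j, b⟩ * x ⟨j, b⟩)
        = ∑ i : Fin (N+1), ∑ j : Fin (N+1), T (i : ℕ) (j : ℕ) := by
          exact Finset.sum_congr rfl fun i _ => Finset.sum_congr rfl fun j _ => e4 i j
      _ = ∑ i : Fin (N+1), ∑ j ∈ Finset.range (N+1), T (i : ℕ) j := by
          exact Finset.sum_congr rfl fun i _ =>
            Fin.sum_univ_eq_sum_range (fun j => T (i : ℕ) j) (N+1)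
      _ = ∑ i ∈ Finset.range (N+1), ∑ j ∈ Finset.range (N+1), T i j :=
          Fin.sum_univ_eq_sum_range (fun i => ∑ j ∈ Finset.range (N+1), T i j) (N+1)
  -- Step B : structural properties of T
  have hT0 : ∀ i j : ℕ, i + 1 < j → T i j = 0 := by
    intro i j hij
    rw [hT]
    unfold Tm
    split_ifs with hi hj
    · refine Finset.sum_eq_zero fun a _ => Finset.sum_eq_zero fun b _ => ?_
      rw [hzero ⟨i, hi⟩ ⟨j, hj⟩ hij a b]
      ring
    · rfl
    · rfl
  have hTsymm : ∀ i j : ℕ, T j i = T i j := by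
    intro i j
    rw [hT]
    unfold Tm
    by_cases hi : i < N + 1
    · by_cases hj : j < N + 1
      · rw [dif_pos hj, dif_pos hi, dif_pos hi, dif_pos hj]
        rw [Finset.sum_comm]
        refine Finset.sum_congr rfl fun a _ => Finset.sum_congr rfl fun b _ => ?_
        rw [hPsymm.apply ⟨⟨i, hi⟩, a⟩ ⟨⟨j, hj⟩, b⟩]
        ring
      · rw [dif_neg hj, dif_pos hi, dif_neg hj]
    · by_cases hj : j < N + 1
      · rw [dif_pos hj, dif_neg hi, dif_neg hi]
      · rw [dif_neg hj, dif_neg hi]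
  -- Step C : collapsing the double sum
  have hmain : ∀ t : ℕ, ∑ i ∈ Finset.range (t+1), ∑ j ∈ Finset.range (t+1), T i j
      = ∑ i ∈ Finset.range (t+1), T i i + 2 * ∑ i ∈ Finset.range t, T i (i+1) := by
    intro t
    induction t with
    | zero => simp
    | succ t ih =>
      have hA : ∑ i ∈ Finset.range (t+1), T i (t+1) = T t (t+1) := by
        refine Finset.sum_eq_single_of_mem t (Finset.self_mem_range_succ t) fun j hj hne => ?_
        exact hT0 j (t+1) (by simp only [Finset.mem_range] at hj; omega)
      have hB : ∑ j ∈ Finset.range (t+1), T (t+1) j = T t (t+1) := by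
        have : ∑ j ∈ Finset.range (t+1), T (t+1) j = ∑ j ∈ Finset.range (t+1), T j (t+1) :=
          Finset.sum_congr rfl fun j _ => hTsymm j (t+1)
        rw [this, hA]
      calc ∑ i ∈ Finset.range (t+1+1), ∑ j ∈ Finset.range (t+1+1), T i j
          = ∑ i ∈ Finset.range (t+1), ∑ j ∈ Finset.range (t+1+1), T i j
            + ∑ j ∈ Finset.range (t+1+1), T (t+1) j := Finset.sum_range_succ _ _
        _ = ∑ i ∈ Finset.range (t+1), (∑ j ∈ Finset.range (t+1), T i j + T i (t+1))
            + (∑ j ∈ Finset.range (t+1), T (t+1) j + T (t+1) (t+1)) := by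
            rw [Finset.sum_range_succ (f := fun j => T (t+1) j)]
            exact congrArg (· + _) (Finset.sum_congr rfl fun i _ => Finset.sum_range_succ _ _)
        _ = (∑ i ∈ Finset.range (t+1), ∑ j ∈ Finset.range (t+1), T i j)
            + (∑ i ∈ Finset.range (t+1), T i (t+1))
            + (∑ j ∈ Finset.range (t+1), T (t+1) j) + T (t+1) (t+1) := by
            rw [Finset.sum_add_distrib]; ring
        _ = ∑ i ∈ Finset.range (t+1+1), T i i + 2 * ∑ i ∈ Finset.range (t+1), T i (i+1) := by
            rw [ih, hA, hB, Finset.sum_range_succ (f := fun i => T i i) (n := t+1),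
              Finset.sum_range_succ (f := fun i => T i (i+1)) (n := t)]
            ring
  -- Step D : termwise identification
  have hdiagT : ∀ i : ℕ, (hi : i < N + 1) → T i i = v i ⬝ᵥ Pb i *ᵥ v i := by
    intro i hi
    rw [hT]
    unfold Tm
    rw [dif_pos hi, dif_pos hi]
    simp only [dotProduct, mulVec, Finset.mul_sum]
    refine Finset.sum_congr rfl fun a _ => Finset.sum_congr rfl fun b _ => ?_
    rw [hdiag ⟨i, hi⟩ a b, hv ⟨i, hi⟩ a, hv ⟨i, hi⟩ b]
  have hcrossT : ∀ i : ℕ, (hi : i + 1 < N + 1) → T i (i+1) = v i ⬝ᵥ Rb i *ᵥ v (i+1) := by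
    intro i hi
    have hi' : i < N + 1 := by omega
    rw [hT]
    unfold Tm
    rw [dif_pos hi', dif_pos hi]
    simp only [dotProduct, mulVec, Finset.mul_sum]
    refine Finset.sum_congr rfl fun a _ => Finset.sum_congr rfl fun b _ => ?_
    rw [hsuper ⟨i, hi'⟩ ⟨i+1, hi⟩ rfl a b, hv ⟨i, hi'⟩ a, hv ⟨i+1, hi⟩ b]
    congr 1
  -- Final assembly
  rw [hQ, hmain N]
  have hlast : v N ⬝ᵥ Rb N *ᵥ v (N+1) = 0 := by
    rw [hv0]; simp
  rw [Finset.sum_add_distrib]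
  have h1 : ∑ i ∈ Finset.range (N+1), v i ⬝ᵥ Pb i *ᵥ v i
      = ∑ i ∈ Finset.range (N+1), T i i := by
    refine Finset.sum_congr rfl fun i hi => ?_
    rw [hdiagT i (Finset.mem_range.mp hi)]
  have h2 : ∑ i ∈ Finset.range (N+1), 2 * (v i ⬝ᵥ Rb i *ᵥ v (i+1))
      = 2 * ∑ i ∈ Finset.range N, T i (i+1) := by
    rw [Finset.sum_range_succ, hlast, ← Finset.mul_sum]
    rw [mul_zero, add_zero]
    congr 1
    refine Finset.sum_congr rfl fun i hi => ?_
    rw [hcrossT i (by simp only [Finset.mem_range] at hi; omega)]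
  rw [h1, h2]

/-- A symmetric block tri-diagonal real matrix `P` (with `N+1 ≥ 1` diagonal
blocks `Pb i`, super-diagonal blocks `Rb i` in position `(i, i+1)`, sub-diagonal blocks `(Rb i)ᵀ`
in position `(i+1, i)` — encoded by symmetry of `P` — and all other blocks zero) is positive
definite if and only if the sequential Schur-complement recursion
`M 0 = Pb 0`, `M (i+1) = Pb (i+1) - (Rb i)ᵀ (M i)⁻¹ (Rb i)`
produces (well-defined, hence) positive definite matrices `M i` for all block indices `i`. -/
theorem stmt0 (N : ℕ) (n : ℕ → ℕ)
    (Pb : (i : ℕ) → Matrix (Fin (n i)) (Fin (n i)) ℝ)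
    (Rb : (i : ℕ) → Matrix (Fin (n i)) (Fin (n (i + 1))) ℝ)
    (hPb : ∀ i, (Pb i).IsSymm)
    (P : Matrix ((i : Fin (N + 1)) × Fin (n i)) ((i : Fin (N + 1)) × Fin (n i)) ℝ)
    (hPsymm : P.IsSymm)
    (hdiag : ∀ (i : Fin (N + 1)) (a b : Fin (n i)), P ⟨i, a⟩ ⟨i, b⟩ = Pb i a b)
    (hsuper : ∀ (i j : Fin (N + 1)) (hij : (j : ℕ) = (i : ℕ) + 1)
      (a : Fin (n i)) (b : Fin (n j)),
      P ⟨i, a⟩ ⟨j, b⟩ = Rb i a (Fin.cast (congrArg n hij) b))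
    (hzero : ∀ (i j : Fin (N + 1)), (i : ℕ) + 1 < (j : ℕ) →
      ∀ (a : Fin (n i)) (b : Fin (n j)), P ⟨i, a⟩ ⟨j, b⟩ = 0)
    (M : (i : ℕ) → Matrix (Fin (n i)) (Fin (n i)) ℝ)
    (hM0 : M 0 = Pb 0)
    (hMs : ∀ i : ℕ, M (i + 1) = Pb (i + 1) - (Rb i)ᵀ * (M i)⁻¹ * Rb i) :
    P.PosDef ↔ ∀ i : Fin (N + 1), (M (i : ℕ)).PosDef := by
  classical
  have hMsym : ∀ i, (M i).IsSymm := M_symm n Pb Rb hPb M hM0 hMs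
  have hMherm : ∀ i, (M i).IsHermitian := by
    intro i
    show (M i)ᴴ = M i
    rw [conjTranspose_eq_transpose_of_trivial]
    exact hMsym i
  constructor
  · -- P PosDef → all Schur complements PosDef
    intro hP
    have key : ∀ k : ℕ, k ≤ N → ∀ j : ℕ, j ≤ k → (M j).PosDef := by
      intro k
      induction k with
      | zero =>
        intro _ j hj
        interval_cases j
        refine PosDef.of_dotProduct_mulVec_pos (hMherm 0) fun w hw => ?_
        -- test vector supported on block 0
        set v : (i : ℕ) → Fin (n i) → ℝ := fun i =>
          if h : i = 0 then fun a => w (Fin.cast (by rw [h]) a) else 0 with hvdef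
        set x : ((i : Fin (N + 1)) × Fin (n i)) → ℝ := fun p => v (p.1 : ℕ) p.2 with hxdef
        have hv00 : v 0 = w := by
          rw [hvdef]; simp only [dif_pos rfl]
          funext a; exact congrArg w (Fin.ext rfl)
        have hvz : ∀ i : ℕ, i ≠ 0 → v i = 0 := by
          intro i hi; rw [hvdef]; simp [hi]
        have hx : x ≠ 0 := by
          obtain ⟨a, ha⟩ := Function.ne_iff.mp hw
          intro hc
          apply ha
          have := congrFun hc ⟨⟨0, Nat.succ_pos N⟩, a⟩
          rw [hxdef] at this
          simpa [hv00] using this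
        have hb := bridge N n Pb Rb P hPsymm hdiag hsuper hzero x v
          (fun i a => rfl) (hvz (N+1) (Nat.succ_ne_zero N))
        have hsum : x ⬝ᵥ P *ᵥ x = w ⬝ᵥ Pb 0 *ᵥ w := by
          rw [hb, Finset.sum_range_succ']
          have hz : ∀ i ∈ Finset.range N,
              (v (i+1) ⬝ᵥ Pb (i+1) *ᵥ v (i+1) + 2 * (v (i+1) ⬝ᵥ Rb (i+1) *ᵥ v (i+1+1))) = 0 := by
            intro i _
            rw [hvz (i+1) (Nat.succ_ne_zero i)]
            simp
          rw [Finset.sum_eq_zero hz, hv00, hvz 1 one_ne_zero]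
          simp
        have := hP.dotProduct_mulVec_pos hx
        rw [star_trivial, hsum, ← hM0] at this
        rwa [star_trivial]
      | succ k ih =>
        intro hk1 j hj
        have hkN : k ≤ N := by omega
        rcases Nat.lt_or_ge j (k+1) with hjk | hjk
        · exact ih hkN j (by omega)
        have hj' : j = k + 1 := by omega
        subst hj'
        -- all previous are PosDef, hence invertible
        have hprev : ∀ j', j' ≤ k → (M j').PosDef := ih hkN
        have hinv : ∀ j', j' ≤ k → IsUnit (M j').det :=
          fun j' hj' => isUnit_iff_ne_zero.mpr (ne_of_gt (hprev j' hj').det_pos)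
        refine PosDef.of_dotProduct_mulVec_pos (hMherm (k+1)) fun w hw => ?_
        set v : (i : ℕ) → Fin (n i) → ℝ := bsub n M Rb k w with hvdef
        set x : ((i : Fin (N + 1)) × Fin (n i)) → ℝ := fun p => v (p.1 : ℕ) p.2 with hxdef
        have hvk1 : v (k+1) = w := bsub_eq n M Rb k w
        have hvz : ∀ i : ℕ, k + 1 < i → v i = 0 := fun i hi => bsub_gt n M Rb k w i hi
        have hzsub : ∀ j', j' ≤ k →
            v j' + (M j')⁻¹ *ᵥ Rb j' *ᵥ v (j'+1) = 0 := by
          intro j' hj'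
          rw [hvdef, bsub_lt n M Rb k w j' (by omega)]
          simp
        have hx : x ≠ 0 := by
          obtain ⟨a, ha⟩ := Function.ne_iff.mp hw
          intro hc
          apply ha
          have := congrFun hc ⟨⟨k+1, by omega⟩, a⟩
          rw [hxdef] at this
          simpa [hvk1] using this
        have hb := bridge N n Pb Rb P hPsymm hdiag hsuper hzero x v
          (fun i a => rfl) (hvz (N+1) (by omega))
        -- split the sum
        have hsq := sq_identity n Pb Rb M hM0 hMs hMsym k v hinv
        have hzero_sq : ∑ i ∈ Finset.range (k+1),
            ((v i + (M i)⁻¹ *ᵥ Rb i *ᵥ v (i+1)) ⬝ᵥ M i *ᵥ (v i + (M i)⁻¹ *ᵥ Rb i *ᵥ v (i+1)))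
            = 0 := by
          refine Finset.sum_eq_zero fun i hi => ?_
          rw [hzsub i (by simp only [Finset.mem_range] at hi; omega)]
          simp
        have hsplit : x ⬝ᵥ P *ᵥ x = w ⬝ᵥ M (k+1) *ᵥ w := by
          rw [hb]
          have hNsplit : Finset.range (N+1) = Finset.range (k+1+1) ∪ Finset.Ico (k+1+1) (N+1) := by
            rw [Finset.range_eq_Ico, ← Finset.Ico_union_Ico_eq_Ico (by omega : 0 ≤ k+1+1) (by omega : k+1+1 ≤ N+1), Finset.range_eq_Ico]
          rw [hNsplit, Finset.sum_union (by
            simp only [Finset.range_eq_Ico]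
            exact Finset.Ico_disjoint_Ico_consecutive 0 (k+1+1) (N+1))]
          have htail : ∑ i ∈ Finset.Ico (k+1+1) (N+1),
              (v i ⬝ᵥ Pb i *ᵥ v i + 2 * (v i ⬝ᵥ Rb i *ᵥ v (i+1))) = 0 := by
            refine Finset.sum_eq_zero fun i hi => ?_
            have : k + 1 < i := by simp only [Finset.mem_Ico] at hi; omega
            rw [hvz i this]
            simp
          rw [htail, add_zero, Finset.sum_range_succ, hsq, hzero_sq, hvk1,
            hvz (k+2) (by omega)]
          have hMq : w ⬝ᵥ Pb (k+1) *ᵥ w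
              - (Rb k *ᵥ w) ⬝ᵥ (M k)⁻¹ *ᵥ (Rb k *ᵥ w) = w ⬝ᵥ M (k+1) *ᵥ w := by
            rw [hMs k, sub_mulVec, dotProduct_sub]
            have : ((Rb k)ᵀ * (M k)⁻¹ * Rb k) *ᵥ w
                = (Rb k)ᵀ *ᵥ ((M k)⁻¹ *ᵥ (Rb k *ᵥ w)) := by
              rw [mulVec_mulVec, mulVec_mulVec, Matrix.mul_assoc]
            rw [this, dot_transpose]
          rw [← hMq]
          simp
          ring
        have := hP.dotProduct_mulVec_pos hx
        rw [star_trivial, hsplit] at this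
        rwa [star_trivial]
    intro i
    exact key N le_rfl i (Nat.lt_succ_iff.mp i.isLt)
  · -- all Schur complements PosDef → P PosDef
    intro hM
    have hMk : ∀ k : ℕ, k ≤ N → (M k).PosDef := by
      intro k hk
      exact hM ⟨k, by omega⟩
    have hinv : ∀ j, j ≤ N → IsUnit (M j).det :=
      fun j hj => isUnit_iff_ne_zero.mpr (ne_of_gt (hMk j hj).det_pos)
    refine PosDef.of_dotProduct_mulVec_pos ?_ ?_
    · show Pᴴ = P
      rw [conjTranspose_eq_transpose_of_trivial]
      exact hPsymm
    intro x hx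
    rw [star_trivial]
    set v : (i : ℕ) → Fin (n i) → ℝ := fun i =>
      if h : i < N + 1 then fun a => x ⟨⟨i, h⟩, a⟩ else 0 with hvdef
    have hv : ∀ (i : Fin (N + 1)) (a : Fin (n i)), v i a = x ⟨i, a⟩ := by
      intro i a
      rw [hvdef]
      simp only [dif_pos i.isLt, Fin.eta]
    have hv0 : v (N+1) = 0 := by
      rw [hvdef]; simp
    have hb := bridge N n Pb Rb P hPsymm hdiag hsuper hzero x v hv hv0
    have hsq := sq_identity n Pb Rb M hM0 hMs hMsym N v hinv
    have hqN : (Rb N *ᵥ v (N+1)) ⬝ᵥ (M N)⁻¹ *ᵥ (Rb N *ᵥ v (N+1)) = 0 := by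
      rw [hv0]; simp
    rw [hb, hsq, hqN, sub_zero]
    -- find the largest index with nonzero v
    obtain ⟨p, hp⟩ := Function.ne_iff.mp hx
    have hvne : v (p.1 : ℕ) ≠ 0 := by
      intro hc
      apply hp
      rw [← hv p.1 p.2, hc]
      rfl
    set i0 := Nat.findGreatest (fun i => v i ≠ 0) N with hi0
    have hp1 : (p.1 : ℕ) ≤ N := Nat.lt_succ_iff.mp p.1.isLt
    have hi0spec : v i0 ≠ 0 := Nat.findGreatest_spec (P := fun i => v i ≠ 0) hp1 hvne
    have hi0le : i0 ≤ N := Nat.findGreatest_le N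
    have hi0max : ∀ j, i0 < j → j ≤ N → v j = 0 := by
      intro j h1 h2
      by_contra hc
      exact Nat.findGreatest_is_greatest h1 h2 hc
    have hvnext : v (i0 + 1) = 0 := by
      rcases Nat.lt_or_ge (i0 + 1) (N + 1) with h | h
      · exact hi0max (i0+1) (Nat.lt_succ_self i0) (by omega)
      · have : i0 + 1 = N + 1 := by omega
        rw [this, hv0]
    refine Finset.sum_pos' (fun i hi => ?_) ⟨i0, Finset.mem_range.mpr (by omega), ?_⟩
    · -- each term nonneg
      have hiN : i ≤ N := by simp only [Finset.mem_range] at hi; omega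
      have := (hMk i hiN).posSemidef.dotProduct_mulVec_nonneg
        (v i + (M i)⁻¹ *ᵥ Rb i *ᵥ v (i+1))
      rwa [star_trivial] at this
    · -- term at i0 positive
      have hz : v i0 + (M i0)⁻¹ *ᵥ Rb i0 *ᵥ v (i0+1) = v i0 := by
        rw [hvnext]
        simp
      rw [hz]
      have := (hMk i0 hi0le).dotProduct_mulVec_pos hi0spec
      rwa [star_trivial] at this
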